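/- Let P be a finite lattice of dimension at most 2 with realizer L_1, L_2, and place each element x at the point (x_1, x_2), where x_i is the height of x in L_i. If two cover edges (x, y) and (x', y') of P cross as straight segments in this drawing, then x ≤ y', x' ≤ y, and x, x' fail to have a unique least upper bound, a contradiction; hence the straight-line drawing is planar. -/

import Mathlib

open Finset

attribute [local instance] Classical.propDecidable

private lemma height_iff {X : Type*} [Fintype X] (r : X → X → Prop) (h : IsLinearOrder X r)
    (a b : X) :
    r a b ↔ (Finset.univ.filter (fun z => r z a)).card ≤
      (Finset.univ.filter (fun z => r z b)).card := by
  constructor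
  · intro hab
    apply Finset.card_le_card
    intro w hw
    simp only [Finset.mem_filter, Finset.mem_univ, true_and] at hw ⊢
    exact h.toIsPartialOrder.toIsPreorder.toIsTrans.trans _ _ _ hw hab
  · intro hc
    by_contra hn
    have hba : r b a := (h.toTotal.total a b).resolve_left hn
    have hsub : (Finset.univ.filter (fun z => r z b)) ⊆ (Finset.univ.filter (fun z => r z a)) := by
      intro w hw
      simp only [Finset.mem_filter, Finset.mem_univ, true_and] at hw ⊢
      exact h.toIsPartialOrder.toIsPreorder.toIsTrans.trans _ _ _ hw hba
    have hss : (Finset.univ.filter (fun z => r z b)) ⊂ (Finset.univ.filter (fun z => r z a)) := by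
      refine (Finset.ssubset_iff_of_subset hsub).2 ⟨a, ?_, ?_⟩
      · simp only [Finset.mem_filter, Finset.mem_univ, true_and]
        exact h.toIsPartialOrder.toIsPreorder.toRefl.refl a
      · simp only [Finset.mem_filter, Finset.mem_univ, true_and]
        exact hn
    exact absurd hc (not_le.2 (Finset.card_lt_card hss))

private lemma seg_coords {a b z : ℝ × ℝ} (h : z ∈ segment ℝ a b) :
    ∃ u v : ℝ, 0 ≤ u ∧ 0 ≤ v ∧ u + v = 1 ∧
      z.1 = u * a.1 + v * b.1 ∧ z.2 = u * a.2 + v * b.2 := by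
  obtain ⟨u, v, hu, hv, huv, hz⟩ := h
  refine ⟨u, v, hu, hv, huv, ?_, ?_⟩ <;> rw [← hz] <;> simp

private lemma seg_between {a b z : ℝ × ℝ} (h : z ∈ segment ℝ a b)
    (h1 : a.1 ≤ b.1) (h2 : a.2 ≤ b.2) :
    a.1 ≤ z.1 ∧ z.1 ≤ b.1 ∧ a.2 ≤ z.2 ∧ z.2 ≤ b.2 := by
  obtain ⟨u, v, hu, hv, huv, e1, e2⟩ := seg_coords h
  have ea : u * a.1 + v * a.1 = a.1 := by linear_combination a.1 * huv
  have eb : u * b.1 + v * b.1 = b.1 := by linear_combination b.1 * huv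
  have ea2 : u * a.2 + v * a.2 = a.2 := by linear_combination a.2 * huv
  have eb2 : u * b.2 + v * b.2 = b.2 := by linear_combination b.2 * huv
  have m1 := mul_le_mul_of_nonneg_left h1 hv
  have m2 := mul_le_mul_of_nonneg_left h1 hu
  have m3 := mul_le_mul_of_nonneg_left h2 hv
  have m4 := mul_le_mul_of_nonneg_left h2 hu
  exact ⟨by linarith, by linarith, by linarith, by linarith⟩

private lemma seg_cross_endpoint {a b b' z : ℝ × ℝ}
    (h : z ∈ segment ℝ a b) (h' : z ∈ segment ℝ a b')
    (hc : (b.1 - a.1) * (b'.2 - a.2) ≠ (b.2 - a.2) * (b'.1 - a.1)) : z = a := by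
  obtain ⟨u, v, hu, hv, huv, e1, e2⟩ := seg_coords h
  obtain ⟨u', v', hu', hv', huv', e1', e2'⟩ := seg_coords h'
  have k1 : z.1 - a.1 = v * (b.1 - a.1) := by linear_combination e1 + a.1 * huv
  have k2 : z.2 - a.2 = v * (b.2 - a.2) := by linear_combination e2 + a.2 * huv
  have k1' : z.1 - a.1 = v' * (b'.1 - a.1) := by linear_combination e1' + a.1 * huv'
  have k2' : z.2 - a.2 = v' * (b'.2 - a.2) := by linear_combination e2' + a.2 * huv'
  have q1 : v * (b.1 - a.1) = v' * (b'.1 - a.1) := by linarith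
  have q2 : v * (b.2 - a.2) = v' * (b'.2 - a.2) := by linarith
  have key : v * ((b.1 - a.1) * (b'.2 - a.2) - (b.2 - a.2) * (b'.1 - a.1)) = 0 := by
    linear_combination (b'.2 - a.2) * q1 - (b'.1 - a.1) * q2
  have hv0 : v = 0 := by
    rcases mul_eq_zero.1 key with h0 | h0
    · exact h0
    · exact absurd (by linarith : (b.1 - a.1) * (b'.2 - a.2) = (b.2 - a.2) * (b'.1 - a.1)) hc
  subst hv0
  have : z.1 = a.1 := by linarith
  have : z.2 = a.2 := by linarith
  exact Prod.ext ‹z.1 = a.1› ‹z.2 = a.2›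

/-- Let `P` be a finite lattice of dimension at most 2 with realizer `L₁, L₂`, and
place each element `x` at the grid point `(x₁, x₂)` where `xᵢ` is the height of `x`
in `Lᵢ`.  Joining covers by straight segments yields a planar drawing: two straight
cover edges can meet only in common endpoints (a genuine crossing of cover edges
`(x,y)` and `(x',y')` would give `x ≤ y'` and `x' ≤ y`, so `x` and `x'` would have
no unique least upper bound, contradicting the lattice property). -/
theorem lattice_grid_drawing_planar {X : Type*} [Lattice X] [Fintype X]
    (r₁ r₂ : X → X → Prop) (h₁ : IsLinearOrder X r₁) (h₂ : IsLinearOrder X r₂)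
    (hreal : ∀ a b : X, a ≤ b ↔ (r₁ a b ∧ r₂ a b)) :
    let p : X → ℝ × ℝ := fun x =>
      (((Finset.univ.filter (fun z => r₁ z x)).card : ℝ),
       ((Finset.univ.filter (fun z => r₂ z x)).card : ℝ))
    ∀ x y x' y' : X, x ⋖ y → x' ⋖ y' → (x, y) ≠ (x', y') →
      ∀ z : ℝ × ℝ, z ∈ segment ℝ (p x) (p y) → z ∈ segment ℝ (p x') (p y') →
        z ∈ ({p x, p y} : Set (ℝ × ℝ)) ∩ ({p x', p y'} : Set (ℝ × ℝ)) := by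
  intro p x y x' y' hxy hx'y' hne z hz hz'
  have hp1 : ∀ u : X, (p u).1 = ((Finset.univ.filter (fun z => r₁ z u)).card : ℝ) := fun _ => rfl
  have hp2 : ∀ u : X, (p u).2 = ((Finset.univ.filter (fun z => r₂ z u)).card : ℝ) := fun _ => rfl
  -- order ↔ coordinates
  have hr1 : ∀ a b : X, r₁ a b ↔ (p a).1 ≤ (p b).1 := by
    intro a b
    rw [hp1, hp1, Nat.cast_le]
    exact height_iff r₁ h₁ a b
  have hr2 : ∀ a b : X, r₂ a b ↔ (p a).2 ≤ (p b).2 := by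
    intro a b
    rw [hp2, hp2, Nat.cast_le]
    exact height_iff r₂ h₂ a b
  have le_iff : ∀ a b : X, a ≤ b ↔ ((p a).1 ≤ (p b).1 ∧ (p a).2 ≤ (p b).2) := by
    intro a b
    rw [hreal, hr1, hr2]
  have strict : ∀ a b : X, a < b → (p a).1 < (p b).1 ∧ (p a).2 < (p b).2 := by
    intro a b hab
    have hle := (le_iff a b).1 hab.le
    have hne1 : (p a).1 ≠ (p b).1 := by
      intro e
      have hba : r₁ b a := (hr1 b a).2 e.ge
      have hab' : r₁ a b := (hr1 a b).2 e.le
      exact hab.ne (h₁.toIsPartialOrder.toAntisymm.antisymm _ _ hab' hba)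
    have hne2 : (p a).2 ≠ (p b).2 := by
      intro e
      have hba : r₂ b a := (hr2 b a).2 e.ge
      have hab' : r₂ a b := (hr2 a b).2 e.le
      exact hab.ne (h₂.toIsPartialOrder.toAntisymm.antisymm _ _ hab' hba)
    exact ⟨lt_of_le_of_ne hle.1 hne1, lt_of_le_of_ne hle.2 hne2⟩
  obtain ⟨s1, s2⟩ := strict x y hxy.lt
  obtain ⟨s1', s2'⟩ := strict x' y' hx'y'.lt
  have hb := seg_between hz s1.le s2.le
  have hb' := seg_between hz' s1'.le s2'.le
  -- x ≤ y' and x' ≤ y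
  have hxley' : x ≤ y' := (le_iff x y').2 ⟨le_trans hb.1 hb'.2.1, le_trans hb.2.2.1 hb'.2.2.2⟩
  have hx'ley : x' ≤ y := (le_iff x' y).2 ⟨le_trans hb'.1 hb.2.1, le_trans hb'.2.2.1 hb.2.2.2⟩
  have hm1 : x ⊔ x' = x ∨ x ⊔ x' = y := hxy.eq_or_eq le_sup_left (sup_le hxy.le hx'ley)
  have hm2 : x ⊔ x' = x' ∨ x ⊔ x' = y' := hx'y'.eq_or_eq le_sup_right (sup_le hxley' hx'y'.le)
  rcases hm1 with hm1 | hm1 <;> rcases hm2 with hm2 | hm2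
  · -- x = x'
    have hxx' : x = x' := hm1 ▸ hm2
    subst hxx'
    have hyy' : y ≠ y' := fun e => hne (by rw [e])
    by_cases hc : ((p y).1 - (p x).1) * ((p y').2 - (p x).2) =
        ((p y).2 - (p x).2) * ((p y').1 - (p x).1)
    · -- parallel: y and y' comparable, contradiction with covers
      exfalso
      by_cases hcmp : (p y).1 ≤ (p y').1
      · have hcmp2 : (p y).2 ≤ (p y').2 := by nlinarith
        have hyley' : y ≤ y' := (le_iff y y').2 ⟨hcmp, hcmp2⟩
        exact hx'y'.2 hxy.lt (lt_of_le_of_ne hyley' hyy')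
      · have hcmp1 : (p y').1 ≤ (p y).1 := le_of_not_ge hcmp
        have hcmp2 : (p y').2 ≤ (p y).2 := by nlinarith
        have hy'ley : y' ≤ y := (le_iff y' y).2 ⟨hcmp1, hcmp2⟩
        exact hxy.2 hx'y'.lt (lt_of_le_of_ne hy'ley (Ne.symm hyy'))
    · have hza : z = p x := seg_cross_endpoint hz hz' hc
      rw [hza]
      exact ⟨Or.inl rfl, Or.inl rfl⟩
  · -- x = y'
    have hxy' : x = y' := hm1 ▸ hm2
    subst hxy'
    have hza : z = p x := Prod.ext (le_antisymm hb'.2.1 hb.1) (le_antisymm hb'.2.2.2 hb.2.2.1)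
    rw [hza]
    exact ⟨Or.inl rfl, Or.inr (Set.mem_singleton _)⟩
  · -- y = x'
    have hyx' : y = x' := hm1.symm.trans hm2
    subst hyx'
    have hza : z = p y := Prod.ext (le_antisymm hb.2.1 hb'.1) (le_antisymm hb.2.2.2 hb'.2.2.1)
    rw [hza]
    exact ⟨Or.inr (Set.mem_singleton _), Or.inl rfl⟩
  · -- y = y'
    have hyy' : y = y' := hm1.symm.trans hm2
    subst hyy'
    have hxx' : x ≠ x' := fun e => hne (by rw [e])
    have hzs : z ∈ segment ℝ (p y) (p x) := by rwa [segment_symm]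
    have hzs' : z ∈ segment ℝ (p y) (p x') := by rwa [segment_symm]
    by_cases hc : ((p x).1 - (p y).1) * ((p x').2 - (p y).2) =
        ((p x).2 - (p y).2) * ((p x').1 - (p y).1)
    · exfalso
      by_cases hcmp : (p x).1 ≤ (p x').1
      · have hcmp2 : (p x).2 ≤ (p x').2 := by nlinarith
        have hxlex' : x ≤ x' := (le_iff x x').2 ⟨hcmp, hcmp2⟩
        exact hxy.2 (lt_of_le_of_ne hxlex' hxx') hx'y'.lt
      · have hcmp1 : (p x').1 ≤ (p x).1 := le_of_not_ge hcmp
        have hcmp2 : (p x').2 ≤ (p x).2 := by nlinarith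
        have hx'lex : x' ≤ x := (le_iff x' x).2 ⟨hcmp1, hcmp2⟩
        exact hx'y'.2 (lt_of_le_of_ne hx'lex (Ne.symm hxx')) hxy.lt
    · have hza : z = p y := seg_cross_endpoint hzs hzs' hc
      rw [hza]
      exact ⟨Or.inr (Set.mem_singleton _), Or.inr (Set.mem_singleton _)⟩
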